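/- Let (V, Ω) be a finite-dimensional real symplectic vector space and consider the Jacobi algebra 𝔥𝔰𝔭(V, Ω) = V × ℝ × 𝔰𝔭(V, Ω) with bracket [(v, z, x), (v', z', x')] = (x v' - x' v, Ω(v, v'), [x, x']). Then for every derivation D of 𝔥𝔰𝔭(V, Ω) that preserves the subalgebra {0} × {0} × 𝔰𝔭(V, Ω), there exist c ∈ ℝ and h ∈ 𝔰𝔭(V, Ω) such that D(v, z, x) = (c v + h v, 2 c z, [h, x]) for all (v, z, x). -/

import Mathlib

set_option maxHeartbeats 1000000


/-- The bracket of the Jacobi algebra `𝔥𝔰𝔭(V, Ω) = V × ℝ × 𝔰𝔭(V, Ω)`: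
`[(v,z,x),(v',z',x')] = (x v' - x' v, Ω v v', [x,x'])`. -/
def jacobiBracket {V : Type*} [AddCommGroup V] [Module ℝ V]
    (Ω : LinearMap.BilinForm ℝ V)
    (p q : V × ℝ × ↥(skewAdjointLieSubalgebra Ω)) :
    V × ℝ × ↥(skewAdjointLieSubalgebra Ω) :=
  ((p.2.2 : Module.End ℝ V) q.1 - (q.2.2 : Module.End ℝ V) p.1, Ω p.1 q.1, ⁅p.2.2, q.2.2⁆)

/-- Polarization: a totally symmetric trilinear-ish real-valued map vanishing on the
diagonal vanishes identically. -/
lemma cubic_polar {V : Type*} [AddCommMonoid V] (T : V → V → V → ℝ)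
    (hadd1 : ∀ a b c d, T (a + b) c d = T a c d + T b c d)
    (hs12 : ∀ a b c, T a b c = T b a c)
    (hs23 : ∀ a b c, T a b c = T a c b)
    (hdiag : ∀ a, T a a a = 0) :
    ∀ a b c, T a b c = 0 := by
  have hadd2 : ∀ a b c d, T a (b + c) d = T a b d + T a c d := by
    intro a b c d; rw [hs12, hadd1, hs12 b a d, hs12 c a d]
  have hadd3 : ∀ a b c d, T a b (c + d) = T a b c + T a b d := by
    intro a b c d
    rw [hs23, hadd2, hs23 a c b, hs23 a d b]
  have P : ∀ a b, T a a b + T a b b = 0 := by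
    intro a b
    have h := hdiag (a + b)
    rw [hadd1, hadd2, hadd2, hadd3, hadd3, hadd3, hadd3] at h
    have e1 : T a b a = T a a b := hs23 a b a
    have e2 : T b a a = T a a b := by rw [hs12 b a a, e1]
    have e3 : T b a b = T a b b := hs12 b a b
    have e4 : T b b a = T a b b := by rw [hs23 b b a, e3]
    rw [hdiag a, hdiag b, e1, e2, e3, e4] at h
    linarith
  intro a b c
  have h := P (a + b) c
  rw [hadd1, hadd2, hadd2, hadd1] at h
  have e0 : T b a c = T a b c := hs12 b a c
  have h1 := P a c
  have h2 := P b c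
  rw [e0] at h
  linarith

/-- Every derivation of the Jacobi algebra `𝔥𝔰𝔭(V, Ω)` preserving the
subalgebra `{0} × {0} × 𝔰𝔭(V, Ω)` is of the form
`D(v, z, x) = (c v + h v, 2 c z, [h, x])` for some `c ∈ ℝ` and `h ∈ 𝔰𝔭(V, Ω)`. -/
theorem jacobi_algebra_derivation_form
    (V : Type*) [AddCommGroup V] [Module ℝ V] [FiniteDimensional ℝ V]
    (Ω : LinearMap.BilinForm ℝ V)
    (hΩalt : ∀ v : V, Ω v v = 0)
    (hΩnondeg : ∀ v : V, (∀ w : V, Ω v w = 0) → v = 0)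
    (D : (V × ℝ × ↥(skewAdjointLieSubalgebra Ω)) →ₗ[ℝ]
      (V × ℝ × ↥(skewAdjointLieSubalgebra Ω)))
    (hD : ∀ p q, D (jacobiBracket Ω p q) =
      jacobiBracket Ω (D p) q + jacobiBracket Ω p (D q))
    (hDsp : ∀ x : ↥(skewAdjointLieSubalgebra Ω),
      (D (0, 0, x)).1 = 0 ∧ (D (0, 0, x)).2.1 = 0) :
    ∃ (c : ℝ) (h : ↥(skewAdjointLieSubalgebra Ω)),
      ∀ (v : V) (z : ℝ) (x : ↥(skewAdjointLieSubalgebra Ω)),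
        D (v, z, x) = (c • v + (h : Module.End ℝ V) v, 2 * c * z, ⁅h, x⁆) := by
  classical
  -- notation
  have hskew : ∀ v w : V, Ω v w = - Ω w v := by
    intro v w
    have h := hΩalt (v + w)
    simp only [map_add, LinearMap.add_apply, hΩalt] at h
    linarith
  have hmem : ∀ f : Module.End ℝ V,
      f ∈ skewAdjointLieSubalgebra Ω ↔ ∀ v w, Ω (f v) w = - Ω v (f w) := by
    intro f
    constructor
    · intro hf v w; simpa using hf v w
    · intro H v w; simpa using H v w
  have hexists : ∀ v : V, v ≠ 0 → ∃ w, Ω v w ≠ 0 := by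
    intro v hv
    by_contra h
    push_neg at h
    exact hv (hΩnondeg v h)
  -- the rank-one skew-adjoint endomorphisms
  have hrk : ∀ a : V, ((Ω a).smulRight a) ∈ skewAdjointLieSubalgebra Ω := by
    intro a
    rw [hmem]
    intro v w
    simp only [LinearMap.smulRight_apply, map_smul, LinearMap.smul_apply, smul_eq_mul]
    rw [hskew v a]
    ring
  -- centrality of (0, z, 0)
  have hjz : ∀ (z : ℝ) (q : V × ℝ × ↥(skewAdjointLieSubalgebra Ω)),
      jacobiBracket Ω ((0 : V), z, (0 : ↥(skewAdjointLieSubalgebra Ω))) q = 0 := by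
    intro z q
    simp [jacobiBracket, Prod.ext_iff]
  have hbr : ∀ q, jacobiBracket Ω
      (D ((0 : V), (1 : ℝ), (0 : ↥(skewAdjointLieSubalgebra Ω)))) q = 0 := by
    intro q
    have h1 := hD ((0 : V), (1 : ℝ), (0 : ↥(skewAdjointLieSubalgebra Ω))) q
    rw [hjz, hjz, map_zero] at h1
    simpa using h1.symm
  have hu : (D ((0 : V), (1 : ℝ), (0 : ↥(skewAdjointLieSubalgebra Ω)))).1 = 0 := by
    apply hΩnondeg
    intro w
    have h := congrArg (fun r => r.2.1)
      (hbr ((w : V), (0 : ℝ), (0 : ↥(skewAdjointLieSubalgebra Ω))))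
    simpa [jacobiBracket] using h
  have hy : (D ((0 : V), (1 : ℝ), (0 : ↥(skewAdjointLieSubalgebra Ω)))).2.2 = 0 := by
    have h : ((D ((0 : V), (1 : ℝ), (0 : ↥(skewAdjointLieSubalgebra Ω)))).2.2 :
        Module.End ℝ V) = 0 := by
      ext w
      have h := congrArg (fun r => r.1)
        (hbr ((w : V), (0 : ℝ), (0 : ↥(skewAdjointLieSubalgebra Ω))))
      simpa [jacobiBracket] using h
    exact Subtype.ext h
  set c : ℝ := (D ((0 : V), (1 : ℝ), (0 : ↥(skewAdjointLieSubalgebra Ω)))).2.1 / 2 with hc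
  have hD1 : D ((0 : V), (1 : ℝ), (0 : ↥(skewAdjointLieSubalgebra Ω)))
      = ((0 : V), 2 * c, (0 : ↥(skewAdjointLieSubalgebra Ω))) := by
    rw [Prod.ext_iff, Prod.ext_iff]
    refine ⟨hu, ?_, hy⟩
    rw [hc]
    ring
  have hDz : ∀ z : ℝ, D ((0 : V), z, (0 : ↥(skewAdjointLieSubalgebra Ω)))
      = ((0 : V), 2 * c * z, (0 : ↥(skewAdjointLieSubalgebra Ω))) := by
    intro z
    have hz : ((0 : V), z, (0 : ↥(skewAdjointLieSubalgebra Ω)))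
        = z • ((0 : V), (1 : ℝ), (0 : ↥(skewAdjointLieSubalgebra Ω))) := by
      simp [Prod.smul_mk]
    rw [hz, map_smul, hD1]
    simp [Prod.smul_mk]
    ring
  -- heis-heis relation
  have hvw : ∀ v w : V,
      ((0 : V), 2 * c * Ω v w, (0 : ↥(skewAdjointLieSubalgebra Ω)))
        = jacobiBracket Ω (D ((v : V), (0 : ℝ), (0 : ↥(skewAdjointLieSubalgebra Ω))))
            ((w : V), (0 : ℝ), (0 : ↥(skewAdjointLieSubalgebra Ω)))
          + jacobiBracket Ω ((v : V), (0 : ℝ), (0 : ↥(skewAdjointLieSubalgebra Ω)))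
            (D ((w : V), (0 : ℝ), (0 : ↥(skewAdjointLieSubalgebra Ω)))) := by
    intro v w
    have h := hD ((v : V), (0 : ℝ), (0 : ↥(skewAdjointLieSubalgebra Ω)))
      ((w : V), (0 : ℝ), (0 : ↥(skewAdjointLieSubalgebra Ω)))
    have hb : jacobiBracket Ω ((v : V), (0 : ℝ), (0 : ↥(skewAdjointLieSubalgebra Ω)))
        ((w : V), (0 : ℝ), (0 : ↥(skewAdjointLieSubalgebra Ω)))
        = ((0 : V), Ω v w, (0 : ↥(skewAdjointLieSubalgebra Ω))) := by
      simp [jacobiBracket]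
    rw [hb, hDz] at h
    exact h
  have hBsym : ∀ v w : V,
      ((D ((v : V), (0 : ℝ), (0 : ↥(skewAdjointLieSubalgebra Ω)))).2.2 : Module.End ℝ V) w
        = ((D ((w : V), (0 : ℝ), (0 : ↥(skewAdjointLieSubalgebra Ω)))).2.2 :
            Module.End ℝ V) v := by
    intro v w
    have h := congrArg (fun r => r.1) (hvw v w)
    simp only [jacobiBracket, Prod.fst_add] at h
    simp only [ZeroMemClass.coe_zero, LinearMap.zero_apply, sub_zero, zero_sub] at h
    have h2 : (0 : V) = ((D ((v : V), (0 : ℝ), (0 : ↥(skewAdjointLieSubalgebra Ω)))).2.2 :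
        Module.End ℝ V) w
        - ((D ((w : V), (0 : ℝ), (0 : ↥(skewAdjointLieSubalgebra Ω)))).2.2 :
            Module.End ℝ V) v := by
      simpa [sub_eq_add_neg] using h
    linear_combination (norm := abel) -h2
  have hAsym : ∀ v w : V,
      Ω ((D ((v : V), (0 : ℝ), (0 : ↥(skewAdjointLieSubalgebra Ω)))).1) w
        + Ω v ((D ((w : V), (0 : ℝ), (0 : ↥(skewAdjointLieSubalgebra Ω)))).1)
        = 2 * c * Ω v w := by
    intro v w
    have h := congrArg (fun r => r.2.1) (hvw v w)
    simpa [jacobiBracket] using h.symm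
  -- sp-heis relation
  have hxv : ∀ (x : ↥(skewAdjointLieSubalgebra Ω)) (v : V),
      D (((x : Module.End ℝ V) v), (0 : ℝ), (0 : ↥(skewAdjointLieSubalgebra Ω)))
        = jacobiBracket Ω (D ((0 : V), (0 : ℝ), x))
            ((v : V), (0 : ℝ), (0 : ↥(skewAdjointLieSubalgebra Ω)))
          + jacobiBracket Ω ((0 : V), (0 : ℝ), x)
            (D ((v : V), (0 : ℝ), (0 : ↥(skewAdjointLieSubalgebra Ω)))) := by
    intro x v
    have h := hD ((0 : V), (0 : ℝ), x)
      ((v : V), (0 : ℝ), (0 : ↥(skewAdjointLieSubalgebra Ω)))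
    have hb : jacobiBracket Ω ((0 : V), (0 : ℝ), x)
        ((v : V), (0 : ℝ), (0 : ↥(skewAdjointLieSubalgebra Ω)))
        = (((x : Module.End ℝ V) v), (0 : ℝ), (0 : ↥(skewAdjointLieSubalgebra Ω))) := by
      simp [jacobiBracket]
    rw [hb] at h
    exact h
  have hA3 : ∀ (x : ↥(skewAdjointLieSubalgebra Ω)) (v : V),
      (D (((x : Module.End ℝ V) v), (0 : ℝ), (0 : ↥(skewAdjointLieSubalgebra Ω)))).1
        = ((D ((0 : V), (0 : ℝ), x)).2.2 : Module.End ℝ V) v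
          + (x : Module.End ℝ V)
            ((D ((v : V), (0 : ℝ), (0 : ↥(skewAdjointLieSubalgebra Ω)))).1) := by
    intro x v
    have h := congrArg (fun r => r.1) (hxv x v)
    simpa [jacobiBracket, (hDsp x).1] using h
  have hφ3 : ∀ (x : ↥(skewAdjointLieSubalgebra Ω)) (v : V),
      (D (((x : Module.End ℝ V) v), (0 : ℝ), (0 : ↥(skewAdjointLieSubalgebra Ω)))).2.1
        = 0 := by
    intro x v
    have h := congrArg (fun r => r.2.1) (hxv x v)
    simpa [jacobiBracket, (hDsp x).1] using h
  have hB3 : ∀ (x : ↥(skewAdjointLieSubalgebra Ω)) (v : V),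
      (D (((x : Module.End ℝ V) v), (0 : ℝ), (0 : ↥(skewAdjointLieSubalgebra Ω)))).2.2
        = ⁅x, (D ((v : V), (0 : ℝ), (0 : ↥(skewAdjointLieSubalgebra Ω)))).2.2⁆ := by
    intro x v
    have h := congrArg (fun r => r.2.2) (hxv x v)
    simpa [jacobiBracket] using h
  
  -- linearity of D on the V-slot
  have hDsmul : ∀ (s : ℝ) (v : V),
      D ((s • v : V), (0 : ℝ), (0 : ↥(skewAdjointLieSubalgebra Ω)))
        = s • D ((v : V), (0 : ℝ), (0 : ↥(skewAdjointLieSubalgebra Ω))) := by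
    intro s v
    have h : ((s • v : V), (0 : ℝ), (0 : ↥(skewAdjointLieSubalgebra Ω)))
        = s • ((v : V), (0 : ℝ), (0 : ↥(skewAdjointLieSubalgebra Ω))) := by
      simp [Prod.smul_mk]
    rw [h, map_smul]
  have hDadd : ∀ v w : V,
      D ((v + w : V), (0 : ℝ), (0 : ↥(skewAdjointLieSubalgebra Ω)))
        = D ((v : V), (0 : ℝ), (0 : ↥(skewAdjointLieSubalgebra Ω)))
          + D ((w : V), (0 : ℝ), (0 : ↥(skewAdjointLieSubalgebra Ω))) := by
    intro v w
    have h : ((v + w : V), (0 : ℝ), (0 : ↥(skewAdjointLieSubalgebra Ω)))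
        = ((v : V), (0 : ℝ), (0 : ↥(skewAdjointLieSubalgebra Ω)))
          + ((w : V), (0 : ℝ), (0 : ↥(skewAdjointLieSubalgebra Ω))) := by
      simp [Prod.mk_add_mk]
    rw [h, map_add]
  -- the real component vanishes on the Heisenberg part
  have hφ0 : ∀ v : V, (D ((v : V), (0 : ℝ), (0 : ↥(skewAdjointLieSubalgebra Ω)))).2.1 = 0 := by
    intro v
    rcases eq_or_ne v 0 with rfl | hv
    · have h : ((0 : V), (0 : ℝ), (0 : ↥(skewAdjointLieSubalgebra Ω)))
          = (0 : V × ℝ × ↥(skewAdjointLieSubalgebra Ω)) := rfl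
      rw [h, map_zero]
      rfl
    · obtain ⟨w, hw⟩ := hexists v hv
      have h := hφ3 ⟨(Ω v).smulRight v, hrk v⟩ w
      have hx : ((⟨(Ω v).smulRight v, hrk v⟩ : ↥(skewAdjointLieSubalgebra Ω)) :
          Module.End ℝ V) w = Ω v w • v := rfl
      rw [hx, hDsmul] at h
      have h2 : Ω v w * (D ((v : V), (0 : ℝ), (0 : ↥(skewAdjointLieSubalgebra Ω)))).2.1 = 0 := by
        simpa using h
      rcases mul_eq_zero.mp h2 with h3 | h3
      · exact absurd h3 hw
      · exact h3
  -- the sp component vanishes on the Heisenberg part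
  have hT : ∀ a b u : V,
      Ω (((D ((a : V), (0 : ℝ), (0 : ↥(skewAdjointLieSubalgebra Ω)))).2.2 :
        Module.End ℝ V) b) u = 0 := by
    apply cubic_polar
    · intro a b c' d
      rw [hDadd]
      simp [map_add]
    · intro a b c'
      exact congrArg (fun t => Ω t c') (hBsym a b)
    · intro a b c'
      have h1 := ((hmem _).mp
        ((D ((a : V), (0 : ℝ), (0 : ↥(skewAdjointLieSubalgebra Ω)))).2.2).property) b c'
      have h2 := hskew
        (((D ((a : V), (0 : ℝ), (0 : ↥(skewAdjointLieSubalgebra Ω)))).2.2 :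
          Module.End ℝ V) c') b
      rw [h1, h2]
    · intro a
      rcases eq_or_ne a 0 with rfl | ha
      · have h : ((0 : V), (0 : ℝ), (0 : ↥(skewAdjointLieSubalgebra Ω)))
            = (0 : V × ℝ × ↥(skewAdjointLieSubalgebra Ω)) := rfl
        simp only [h, map_zero]
      · obtain ⟨w, hw⟩ := hexists a ha
        have h := hB3 ⟨(Ω a).smulRight a, hrk a⟩ w
        have hx : ((⟨(Ω a).smulRight a, hrk a⟩ : ↥(skewAdjointLieSubalgebra Ω)) :
            Module.End ℝ V) w = Ω a w • a := rfl
        rw [hx, hDsmul] at h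
        have h' : Ω a w • (D ((a : V), (0 : ℝ), (0 : ↥(skewAdjointLieSubalgebra Ω)))).2.2
            = ⁅(⟨(Ω a).smulRight a, hrk a⟩ : ↥(skewAdjointLieSubalgebra Ω)),
                (D ((w : V), (0 : ℝ), (0 : ↥(skewAdjointLieSubalgebra Ω)))).2.2⁆ := h
        have h2 := congrArg
          (fun y => Ω (((y : ↥(skewAdjointLieSubalgebra Ω)) : Module.End ℝ V) a) a) h'
        have hLrfl : ((Ω a w • (D ((a : V), (0 : ℝ),
            (0 : ↥(skewAdjointLieSubalgebra Ω)))).2.2 :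
              ↥(skewAdjointLieSubalgebra Ω)) : Module.End ℝ V) a
            = Ω a w • (((D ((a : V), (0 : ℝ),
                (0 : ↥(skewAdjointLieSubalgebra Ω)))).2.2 : Module.End ℝ V) a) := rfl
        rw [hLrfl, map_smul] at h2
        -- now handle the right-hand side
        have hxa : ((⟨(Ω a).smulRight a, hrk a⟩ : ↥(skewAdjointLieSubalgebra Ω)) :
            Module.End ℝ V) a = 0 := by
          show Ω a a • a = 0
          rw [hΩalt]
          exact zero_smul ℝ a
        have hRco : ((⁅(⟨(Ω a).smulRight a, hrk a⟩ : ↥(skewAdjointLieSubalgebra Ω)),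
            (D ((w : V), (0 : ℝ), (0 : ↥(skewAdjointLieSubalgebra Ω)))).2.2⁆ :
              ↥(skewAdjointLieSubalgebra Ω)) : Module.End ℝ V) a
            = ((⟨(Ω a).smulRight a, hrk a⟩ : ↥(skewAdjointLieSubalgebra Ω)) :
                Module.End ℝ V) (((D ((w : V), (0 : ℝ),
                  (0 : ↥(skewAdjointLieSubalgebra Ω)))).2.2 : Module.End ℝ V) a)
              - ((D ((w : V), (0 : ℝ),
                  (0 : ↥(skewAdjointLieSubalgebra Ω)))).2.2 : Module.End ℝ V)
                (((⟨(Ω a).smulRight a, hrk a⟩ : ↥(skewAdjointLieSubalgebra Ω)) :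
                    Module.End ℝ V) a) := by
          simp only [LieSubalgebra.coe_bracket, Ring.lie_def]
          rfl
        rw [hRco, hxa, map_zero, sub_zero] at h2
        have hfin : Ω (((⟨(Ω a).smulRight a, hrk a⟩ : ↥(skewAdjointLieSubalgebra Ω)) :
            Module.End ℝ V) (((D ((w : V), (0 : ℝ),
              (0 : ↥(skewAdjointLieSubalgebra Ω)))).2.2 : Module.End ℝ V) a)) a = 0 := by
          have : ((⟨(Ω a).smulRight a, hrk a⟩ : ↥(skewAdjointLieSubalgebra Ω)) :
              Module.End ℝ V) (((D ((w : V), (0 : ℝ),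
                (0 : ↥(skewAdjointLieSubalgebra Ω)))).2.2 : Module.End ℝ V) a)
              = Ω a (((D ((w : V), (0 : ℝ),
                (0 : ↥(skewAdjointLieSubalgebra Ω)))).2.2 : Module.End ℝ V) a) • a := rfl
          rw [this, map_smul]
          simp [hΩalt]
        rw [hfin] at h2
        have h3 : Ω a w * Ω (((D ((a : V), (0 : ℝ),
            (0 : ↥(skewAdjointLieSubalgebra Ω)))).2.2 : Module.End ℝ V) a) a = 0 := by
          simpa using h2
        rcases mul_eq_zero.mp h3 with h4 | h4
        · exact absurd h4 hw
        · exact h4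
  have hB0 : ∀ v : V,
      (D ((v : V), (0 : ℝ), (0 : ↥(skewAdjointLieSubalgebra Ω)))).2.2 = 0 := by
    intro v
    apply Subtype.ext
    ext w
    show (((D ((v : V), (0 : ℝ), (0 : ↥(skewAdjointLieSubalgebra Ω)))).2.2 :
      Module.End ℝ V)) w = 0
    exact hΩnondeg _ (fun u => hT v w u)
  -- construct h
  set AL : Module.End ℝ V :=
    (LinearMap.fst ℝ V (ℝ × ↥(skewAdjointLieSubalgebra Ω))).comp
      (D.comp (LinearMap.inl ℝ V (ℝ × ↥(skewAdjointLieSubalgebra Ω)))) with hALdef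
  have hAL : ∀ v : V, AL v
      = (D ((v : V), (0 : ℝ), (0 : ↥(skewAdjointLieSubalgebra Ω)))).1 := fun v => rfl
  have hh0 : (AL - c • LinearMap.id) ∈ skewAdjointLieSubalgebra Ω := by
    rw [hmem]
    intro v w
    have h := hAsym v w
    rw [← hAL v, ← hAL w] at h
    simp only [LinearMap.sub_apply, LinearMap.smul_apply, LinearMap.id_apply, map_sub,
      map_smul, LinearMap.sub_apply, LinearMap.smul_apply, smul_eq_mul]
    linarith
  refine ⟨c, ⟨AL - c • LinearMap.id, hh0⟩, ?_⟩
  intro v z x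
  have hDv : D ((v : V), (0 : ℝ), (0 : ↥(skewAdjointLieSubalgebra Ω)))
      = ((AL v : V), (0 : ℝ), (0 : ↥(skewAdjointLieSubalgebra Ω))) := by
    rw [Prod.ext_iff, Prod.ext_iff]
    exact ⟨(hAL v).symm, hφ0 v, hB0 v⟩
  have hδ : (D ((0 : V), (0 : ℝ), x)).2.2
      = ⁅(⟨AL - c • LinearMap.id, hh0⟩ : ↥(skewAdjointLieSubalgebra Ω)), x⁆ := by
    apply Subtype.ext
    have hco : ((⁅(⟨AL - c • LinearMap.id, hh0⟩ : ↥(skewAdjointLieSubalgebra Ω)), x⁆ :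
        ↥(skewAdjointLieSubalgebra Ω)) : Module.End ℝ V)
        = (AL - c • LinearMap.id) * (x : Module.End ℝ V)
          - (x : Module.End ℝ V) * (AL - c • LinearMap.id) := by
      simp [Ring.lie_def]
    rw [hco]
    ext w
    have h := hA3 x w
    rw [← hAL w, ← hAL ((x : Module.End ℝ V) w)] at h
    simp only [LinearMap.sub_apply, Module.End.mul_apply, LinearMap.smul_apply,
      LinearMap.id_apply, map_smul]
    rw [eq_sub_iff_add_eq]
    rw [h]
    rw [map_sub, map_smul]
    abel
  have hDx : D ((0 : V), (0 : ℝ), x)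
      = ((0 : V), (0 : ℝ),
        (⁅(⟨AL - c • LinearMap.id, hh0⟩ : ↥(skewAdjointLieSubalgebra Ω)), x⁆ :
          ↥(skewAdjointLieSubalgebra Ω))) := by
    rw [Prod.ext_iff, Prod.ext_iff]
    exact ⟨(hDsp x).1, (hDsp x).2, hδ⟩
  have hsplit : ((v : V), z, x)
      = ((v : V), (0 : ℝ), (0 : ↥(skewAdjointLieSubalgebra Ω)))
        + ((0 : V), z, (0 : ↥(skewAdjointLieSubalgebra Ω)))
        + ((0 : V), (0 : ℝ), x) := by
    simp [Prod.mk_add_mk]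
  rw [hsplit, map_add, map_add, hDv, hDz, hDx]
  rw [Prod.mk_add_mk, Prod.mk_add_mk, Prod.mk_add_mk, Prod.mk_add_mk]
  rw [Prod.ext_iff, Prod.ext_iff]
  refine ⟨?_, by ring, by simp⟩
  simp only [LinearMap.sub_apply, LinearMap.smul_apply, LinearMap.id_apply]
  abel
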